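/- Define V : [0,1] × [0,2] → ℝ as follows. For 0 ≤ u ≤ 1/5: V(u,v) = 2 - 2u² + uv - v² - v if 0 ≤ v ≤ 2u; V(u,v) = 2 - v - u² - (3/4)v² if 2u ≤ v ≤ (1-u)/2; V(u,v) = (1/4)(9 - 3u² + 4uv + v² - 2u - 8v) if (1-u)/2 ≤ v ≤ (1+3u)/2; V(u,v) = (7/12)(2-v)² if (1+3u)/2 ≤ v ≤ 2. For 1/5 ≤ u ≤ 1: V(u,v) = 2 - 2u² + uv - v² - v if 0 ≤ v ≤ (1-u)/2; V(u,v) = (1/4)(1-u)(7u - 8v + 9) if (1-u)/2 ≤ v ≤ 2u; V(u,v) = (1/4)(9 - 3u² + 4uv + v² - 2u - 8v) if 2u ≤ v ≤ (1+3u)/2; V(u,v) = (7/12)(2-v)² if (1+3u)/2 ≤ v ≤ 2. Then (3/4)·∫₀¹∫₀² V(u,v) dv du = 13/16. (This computes S(W^B_{•,•}; C₀) = 13/16 in the proof of Theorem 3.1, case (♡).) -/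

import Mathlib

open MeasureTheory intervalIntegral Set

/-- Integral of a cubic polynomial. -/
lemma cubic_int (c0 c1 c2 c3 a b : ℝ) :
    ∫ x in a..b, (c0 + c1*x + c2*x^2 + c3*x^3) =
      c0*(b-a) + c1*(b^2-a^2)/2 + c2*(b^3-a^3)/3 + c3*(b^4-a^4)/4 := by
  have H : ∀ x ∈ Set.uIcc a b,
      HasDerivAt (fun t => c0 * t + c1/2 * t^2 + c2/3 * t^3 + c3/4 * t^4)
        (c0 + c1*x + c2*x^2 + c3*x^3) x := by
    intro x _
    have h := (((hasDerivAt_id x).const_mul c0).add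
        ((hasDerivAt_pow 2 x).const_mul (c1/2))).add
        (((hasDerivAt_pow 3 x).const_mul (c2/3)).add
          ((hasDerivAt_pow 4 x).const_mul (c3/4)))
    convert h using 1
    · rfl
    · rfl
    · funext t; simp only [id, Pi.add_apply]; ring
    · push_cast; ring
  rw [intervalIntegral.integral_eq_sub_of_hasDerivAt H
    (Continuous.intervalIntegrable (by fun_prop) _ _)]
  ring

/-- Integrability via equality with a continuous function on the interval. -/
lemma ii_congr {f g : ℝ → ℝ} {a b : ℝ} (h : Set.EqOn f g (Set.uIcc a b))
    (hg : Continuous g) : IntervalIntegrable f volume a b :=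
  (hg.intervalIntegrable a b).congr <| by
    intro x hx
    exact (h (Set.uIoc_subset_uIcc hx)).symm

/-- The computation `S(W^B_{•,•};C₀) = 13/16` in the proof of Theorem 3.1, case (♡):
for any function `V` agreeing with the piecewise-polynomial volume function
`vol(P(u)|_B - vC₀)` on `[0,1] × [0,2]`, one has `(3/4)·∫₀¹∫₀² V(u,v) dv du = 13/16`. -/
theorem stmt_13 (V : ℝ → ℝ → ℝ)
    (h₁ : ∀ u v, 0 ≤ u → u ≤ 1/5 → 0 ≤ v → v ≤ 2*u →
      V u v = 2 - 2*u^2 + u*v - v^2 - v)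
    (h₂ : ∀ u v, 0 ≤ u → u ≤ 1/5 → 2*u ≤ v → v ≤ (1-u)/2 →
      V u v = 2 - v - u^2 - (3/4)*v^2)
    (h₃ : ∀ u v, 0 ≤ u → u ≤ 1/5 → (1-u)/2 ≤ v → v ≤ (1+3*u)/2 →
      V u v = (1/4)*(9 - 3*u^2 + 4*u*v + v^2 - 2*u - 8*v))
    (h₄ : ∀ u v, 0 ≤ u → u ≤ 1/5 → (1+3*u)/2 ≤ v → v ≤ 2 →
      V u v = (7/12)*(2-v)^2)
    (h₅ : ∀ u v, 1/5 ≤ u → u ≤ 1 → 0 ≤ v → v ≤ (1-u)/2 →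
      V u v = 2 - 2*u^2 + u*v - v^2 - v)
    (h₆ : ∀ u v, 1/5 ≤ u → u ≤ 1 → (1-u)/2 ≤ v → v ≤ 2*u →
      V u v = (1/4)*(1-u)*(7*u - 8*v + 9))
    (h₇ : ∀ u v, 1/5 ≤ u → u ≤ 1 → 2*u ≤ v → v ≤ (1+3*u)/2 →
      V u v = (1/4)*(9 - 3*u^2 + 4*u*v + v^2 - 2*u - 8*v))
    (h₈ : ∀ u v, 1/5 ≤ u → u ≤ 1 → (1+3*u)/2 ≤ v → v ≤ 2 →
      V u v = (7/12)*(2-v)^2) :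
    (3/4 : ℝ) * (∫ u in (0:ℝ)..1, ∫ v in (0:ℝ)..2, V u v) = 13/16 := by
  have inner : ∀ u ∈ Set.uIcc (0:ℝ) 1,
      (∫ v in (0:ℝ)..2, V u v) = 3/2 - u^2/2 - u^3 := by
    intro u hu
    rw [Set.uIcc_of_le (by norm_num : (0:ℝ) ≤ 1)] at hu
    obtain ⟨hu0, hu1⟩ := hu
    rcases le_or_gt u (1/5) with hc | hc
    · -- 0 ≤ 2u ≤ (1-u)/2 ≤ (1+3u)/2 ≤ 2
      have o1 : (0:ℝ) ≤ 2*u := by linarith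
      have o2 : 2*u ≤ (1-u)/2 := by linarith
      have o3 : (1-u)/2 ≤ (1+3*u)/2 := by linarith
      have o4 : (1+3*u)/2 ≤ 2 := by linarith
      have e1 : Set.EqOn (V u) (fun v => (2-2*u^2) + (u-1)*v + (-1)*v^2 + 0*v^3)
          (Set.uIcc 0 (2*u)) := by
        intro v hv; rw [Set.uIcc_of_le o1] at hv
        rw [h₁ u v hu0 hc hv.1 hv.2]; ring
      have e2 : Set.EqOn (V u) (fun v => (2-u^2) + (-1)*v + (-3/4)*v^2 + 0*v^3)
          (Set.uIcc (2*u) ((1-u)/2)) := by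
        intro v hv; rw [Set.uIcc_of_le o2] at hv
        rw [h₂ u v hu0 hc hv.1 hv.2]; ring
      have e3 : Set.EqOn (V u) (fun v => (9-3*u^2-2*u)/4 + (u-2)*v + (1/4)*v^2 + 0*v^3)
          (Set.uIcc ((1-u)/2) ((1+3*u)/2)) := by
        intro v hv; rw [Set.uIcc_of_le o3] at hv
        rw [h₃ u v hu0 hc hv.1 hv.2]; ring
      have e4 : Set.EqOn (V u) (fun v => 7/3 + (-7/3)*v + (7/12)*v^2 + 0*v^3)
          (Set.uIcc ((1+3*u)/2) 2) := by
        intro v hv; rw [Set.uIcc_of_le o4] at hv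
        rw [h₄ u v hu0 hc hv.1 hv.2]; ring
      have i1 : IntervalIntegrable (V u) volume 0 (2*u) := ii_congr e1 (by fun_prop)
      have i2 : IntervalIntegrable (V u) volume (2*u) ((1-u)/2) := ii_congr e2 (by fun_prop)
      have i3 : IntervalIntegrable (V u) volume ((1-u)/2) ((1+3*u)/2) := ii_congr e3 (by fun_prop)
      have i4 : IntervalIntegrable (V u) volume ((1+3*u)/2) 2 := ii_congr e4 (by fun_prop)
      rw [← intervalIntegral.integral_add_adjacent_intervals
            (i1.trans (i2.trans i3)) i4,
          ← intervalIntegral.integral_add_adjacent_intervals (i1.trans i2) i3,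
          ← intervalIntegral.integral_add_adjacent_intervals i1 i2,
          intervalIntegral.integral_congr e1, intervalIntegral.integral_congr e2,
          intervalIntegral.integral_congr e3, intervalIntegral.integral_congr e4,
          cubic_int, cubic_int, cubic_int, cubic_int]
      ring
    · have hc' : 1/5 ≤ u := le_of_lt hc
      have o1 : (0:ℝ) ≤ (1-u)/2 := by linarith
      have o2 : (1-u)/2 ≤ 2*u := by linarith
      have o3 : 2*u ≤ (1+3*u)/2 := by linarith
      have o4 : (1+3*u)/2 ≤ 2 := by linarith
      have e1 : Set.EqOn (V u) (fun v => (2-2*u^2) + (u-1)*v + (-1)*v^2 + 0*v^3)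
          (Set.uIcc 0 ((1-u)/2)) := by
        intro v hv; rw [Set.uIcc_of_le o1] at hv
        rw [h₅ u v hc' hu1 hv.1 hv.2]; ring
      have e2 : Set.EqOn (V u) (fun v => (1-u)*(7*u+9)/4 + (-2*(1-u))*v + 0*v^2 + 0*v^3)
          (Set.uIcc ((1-u)/2) (2*u)) := by
        intro v hv; rw [Set.uIcc_of_le o2] at hv
        rw [h₆ u v hc' hu1 hv.1 hv.2]; ring
      have e3 : Set.EqOn (V u) (fun v => (9-3*u^2-2*u)/4 + (u-2)*v + (1/4)*v^2 + 0*v^3)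
          (Set.uIcc (2*u) ((1+3*u)/2)) := by
        intro v hv; rw [Set.uIcc_of_le o3] at hv
        rw [h₇ u v hc' hu1 hv.1 hv.2]; ring
      have e4 : Set.EqOn (V u) (fun v => 7/3 + (-7/3)*v + (7/12)*v^2 + 0*v^3)
          (Set.uIcc ((1+3*u)/2) 2) := by
        intro v hv; rw [Set.uIcc_of_le o4] at hv
        rw [h₈ u v hc' hu1 hv.1 hv.2]; ring
      have i1 : IntervalIntegrable (V u) volume 0 ((1-u)/2) := ii_congr e1 (by fun_prop)
      have i2 : IntervalIntegrable (V u) volume ((1-u)/2) (2*u) := ii_congr e2 (by fun_prop)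
      have i3 : IntervalIntegrable (V u) volume (2*u) ((1+3*u)/2) := ii_congr e3 (by fun_prop)
      have i4 : IntervalIntegrable (V u) volume ((1+3*u)/2) 2 := ii_congr e4 (by fun_prop)
      rw [← intervalIntegral.integral_add_adjacent_intervals
            (i1.trans (i2.trans i3)) i4,
          ← intervalIntegral.integral_add_adjacent_intervals (i1.trans i2) i3,
          ← intervalIntegral.integral_add_adjacent_intervals i1 i2,
          intervalIntegral.integral_congr e1, intervalIntegral.integral_congr e2,
          intervalIntegral.integral_congr e3, intervalIntegral.integral_congr e4,
          cubic_int, cubic_int, cubic_int, cubic_int]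
      ring
  rw [intervalIntegral.integral_congr inner]
  have : (∫ u in (0:ℝ)..1, (3/2 - u^2/2 - u^3)) =
      ∫ u in (0:ℝ)..1, ((3/2) + 0*u + (-1/2)*u^2 + (-1)*u^3) := by
    apply intervalIntegral.integral_congr; intro x _; ring
  rw [this, cubic_int]
  norm_num
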